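/- Let R = K[x1, x2, y1, ..., yq, z1, ..., zs] be a polynomial ring over a field and let f ∈ R. Suppose f = x1·g1 + x2·g2 + y_{i1}⋯y_{it}·g3, where {i1 < ... < it} ⊆ {1,...,q} is maximal by inclusion among subsets S of {1,...,q} such that f can be written in the form x1·h1 + x2·h2 + (∏_{j∈S} y_j)·h3. Then the ideal quotient [(x1, x2, f) : (y1⋯yq)] equals (x1, x2, g3). -/
import Mathlib

open MvPolynomial

set_option linter.unusedSectionVars false

section PrimeX

variable {A : Type*} [CommRing A] [IsDomain A] {τ : Type*} [DecidableEq τ]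

noncomputable def epsAux (i : τ) : MvPolynomial τ A →ₐ[A] MvPolynomial τ A :=
  aeval (Function.update X i 0)

lemma epsAux_X_self (i : τ) : epsAux (A := A) i (X i) = 0 := by
  simp [epsAux]

lemma epsAux_X_ne {i j : τ} (h : j ≠ i) : epsAux (A := A) i (X j) = X j := by
  simp [epsAux, Function.update_of_ne h]

lemma X_dvd_sub_epsAux (i : τ) (p : MvPolynomial τ A) : X i ∣ p - epsAux i p := by
  induction p using MvPolynomial.induction_on with
  | C a => simp [epsAux]
  | add p r hp hr => simpa [map_add, add_sub_add_comm] using dvd_add hp hr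
  | mul_X p n hp =>
    rcases eq_or_ne n i with rfl | hn
    · rw [map_mul, epsAux_X_self, mul_zero, sub_zero]
      exact Dvd.intro_left p rfl
    · rw [map_mul, epsAux_X_ne hn]
      have h2 : p * X n - epsAux i p * X n = (p - epsAux i p) * X n := by ring
      rw [h2]
      exact hp.mul_right _

lemma X_dvd_iff_epsAux (i : τ) (p : MvPolynomial τ A) : X i ∣ p ↔ epsAux i p = 0 := by
  constructor
  · rintro ⟨c, rfl⟩
    rw [map_mul, epsAux_X_self, zero_mul]
  · intro h
    simpa [h] using X_dvd_sub_epsAux i p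

lemma prime_X_mv (i : τ) : Prime (X i : MvPolynomial τ A) := by
  refine ⟨X_ne_zero i, ?_, ?_⟩
  · intro h
    have h2 := h.map (constantCoeff (R := A) (σ := τ))
    rw [constantCoeff_X] at h2
    exact not_isUnit_zero h2
  · intro a b hab
    rw [X_dvd_iff_epsAux, map_mul] at hab
    rcases mul_eq_zero.mp hab with h | h
    · exact Or.inl ((X_dvd_iff_epsAux i a).mpr h)
    · exact Or.inr ((X_dvd_iff_epsAux i b).mpr h)

end PrimeX

section PhiPsi

variable {K : Type*} [Field K] {q s : ℕ}

noncomputable def phiA (K : Type*) [Field K] (q s : ℕ) :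
    MvPolynomial (Fin 2 ⊕ Fin q ⊕ Fin s) K →ₐ[K] MvPolynomial (Fin q ⊕ Fin s) K :=
  aeval (Sum.elim (fun _ => 0) X)

noncomputable def psiA (K : Type*) [Field K] (q s : ℕ) :
    MvPolynomial (Fin q ⊕ Fin s) K →ₐ[K] MvPolynomial (Fin 2 ⊕ Fin q ⊕ Fin s) K :=
  rename Sum.inr

@[simp] lemma phiA_X_inl (i : Fin 2) : phiA K q s (X (Sum.inl i)) = 0 := by simp [phiA]

@[simp] lemma phiA_X_inr (t : Fin q ⊕ Fin s) : phiA K q s (X (Sum.inr t)) = X t := by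
  simp [phiA]

@[simp] lemma psiA_X (t : Fin q ⊕ Fin s) : psiA K q s (X t) = X (Sum.inr t) := by
  simp [psiA]

lemma phiA_psiA (p : MvPolynomial (Fin q ⊕ Fin s) K) : phiA K q s (psiA K q s p) = p := by
  simp only [phiA, psiA, aeval_rename, Sum.elim_comp_inr]
  exact aeval_X_left_apply p

lemma X_inl_mem (i : Fin 2) :
    (X (Sum.inl i) : MvPolynomial (Fin 2 ⊕ Fin q ⊕ Fin s) K) ∈
      Ideal.span {X (Sum.inl 0), X (Sum.inl 1)} := by
  fin_cases i <;> exact Ideal.subset_span (by simp)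

lemma keyA (p : MvPolynomial (Fin 2 ⊕ Fin q ⊕ Fin s) K) :
    p - psiA K q s (phiA K q s p) ∈
      Ideal.span {X (Sum.inl 0), X (Sum.inl 1)} := by
  induction p using MvPolynomial.induction_on with
  | C a => simp only [aeval_C, phiA, psiA, algebraMap_eq, rename_C, sub_self]; exact Ideal.zero_mem _
  | add p r hp hr =>
    have : p + r - psiA K q s (phiA K q s (p + r)) =
        (p - psiA K q s (phiA K q s p)) + (r - psiA K q s (phiA K q s r)) := by
      rw [map_add, map_add]; ring
    rw [this]; exact Ideal.add_mem _ hp hr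
  | mul_X p n hp =>
    rcases n with i | t
    · rw [map_mul, phiA_X_inl, mul_zero, map_zero, sub_zero]
      exact Ideal.mul_mem_left _ _ (X_inl_mem i)
    · rw [map_mul, phiA_X_inr, map_mul, psiA_X]
      have : p * X (Sum.inr t) - psiA K q s (phiA K q s p) * X (Sum.inr t) =
          (p - psiA K q s (phiA K q s p)) * X (Sum.inr t) := by ring
      rw [this]
      exact Ideal.mul_mem_right _ _ hp

lemma mem_span_xx_iff (p : MvPolynomial (Fin 2 ⊕ Fin q ⊕ Fin s) K) :
    p ∈ Ideal.span {X (Sum.inl 0), X (Sum.inl 1)} ↔ phiA K q s p = 0 := by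
  constructor
  · intro hp
    have hle : Ideal.span {(X (Sum.inl 0) : MvPolynomial (Fin 2 ⊕ Fin q ⊕ Fin s) K),
        X (Sum.inl 1)} ≤ RingHom.ker (phiA K q s).toRingHom := by
      rw [Ideal.span_le]
      rintro r hr
      simp only [Set.mem_insert_iff, Set.mem_singleton_iff] at hr
      rcases hr with rfl | rfl <;> simp [RingHom.mem_ker]
    exact hle hp
  · intro h
    have := keyA (K := K) (q := q) (s := s) p
    rwa [h, map_zero, sub_zero] at this

end PhiPsi

/-- In `R = K[x₁, x₂, y₁,…,y_q, z₁,…,z_s]`, suppose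
`f = x₁·g₁ + x₂·g₂ + (∏_{j∈S} y_j)·g₃` where `S ⊆ {1,…,q}` is maximal by
inclusion among subsets `T` with `f ∈ (x₁,x₂) + (∏_{j∈T} y_j)·R`.  Then
`[(x₁, x₂, f) : (y₁⋯y_q)] = (x₁, x₂, g₃)`. -/
theorem stmt_2 (K : Type*) [Field K] (q s : ℕ)
    (f g1 g2 g3 : MvPolynomial (Fin 2 ⊕ Fin q ⊕ Fin s) K)
    (S : Finset (Fin q)) :
    let R := MvPolynomial (Fin 2 ⊕ Fin q ⊕ Fin s) K
    let x : Fin 2 → R := fun i => X (Sum.inl i)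
    let y : Fin q → R := fun j => X (Sum.inr (Sum.inl j))
    let admits : Finset (Fin q) → Prop := fun T =>
      f ∈ Ideal.span {x 0, x 1} ⊔ Ideal.span {∏ j ∈ T, y j}
    admits S →
    (∀ T, admits T → S ⊆ T → T = S) →
    f = x 0 * g1 + x 1 * g2 + (∏ j ∈ S, y j) * g3 →
    (Ideal.span {x 0, x 1, f}).colon (Ideal.span {∏ j, y j}) =
      Ideal.span {x 0, x 1, g3} := by
  intro R x y admits hadm hmax hf
  classical
  set φ := phiA K q s with hφdef
  set ψ := psiA K q s with hψdef
  have hφx0 : φ (x 0) = 0 := phiA_X_inl 0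
  have hφx1 : φ (x 1) = 0 := phiA_X_inl 1
  have hφy : ∀ j : Fin q, φ (y j) = X (Sum.inl j) := fun j => phiA_X_inr _
  have hφprod : ∀ T : Finset (Fin q),
      φ (∏ j ∈ T, y j) = ∏ j ∈ T, X (Sum.inl j) := by
    intro T
    rw [map_prod]
    exact Finset.prod_congr rfl fun j _ => hφy j
  have hSne : (∏ j ∈ S, (X (Sum.inl j) : MvPolynomial (Fin q ⊕ Fin s) K)) ≠ 0 :=
    Finset.prod_ne_zero_iff.mpr fun j _ => X_ne_zero _
  have hφf : φ f = (∏ j ∈ S, X (Sum.inl j)) * φ g3 := by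
    rw [hf]
    simp only [map_add, map_mul, hφx0, hφx1, zero_mul, zero_add, hφprod]
  -- maximality implies no y_j (j ∉ S) divides g3 modulo (x0, x1)
  have hnd : ∀ j : Fin q, j ∉ S → ¬ (X (Sum.inl j) ∣ φ g3) := by
    intro j hj hdvd
    obtain ⟨d, hd⟩ := hdvd
    have hk : g3 - ψ (φ g3) ∈ Ideal.span {x 0, x 1} := keyA g3
    have hpsi : ψ (φ g3) = y j * ψ d := by
      rw [hd, map_mul, hψdef, psiA_X]
    have hadm' : admits (insert j S) := by
      show f ∈ Ideal.span {x 0, x 1} ⊔ Ideal.span {∏ j' ∈ insert j S, y j'}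
      rw [Submodule.mem_sup]
      refine ⟨x 0 * g1 + x 1 * g2 + (∏ j' ∈ S, y j') * (g3 - ψ (φ g3)), ?_,
        (∏ j' ∈ insert j S, y j') * ψ d, ?_, ?_⟩
      · exact Ideal.add_mem _ (Ideal.add_mem _
          (Ideal.mul_mem_right _ _ (Ideal.subset_span (by simp)))
          (Ideal.mul_mem_right _ _ (Ideal.subset_span (by simp))))
          (Ideal.mul_mem_left _ _ hk)
      · exact Ideal.mul_mem_right _ _ (Ideal.subset_span rfl)
      · rw [Finset.prod_insert hj, hf]
        linear_combination (-(∏ j' ∈ S, y j')) * hpsi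
    have hins := hmax _ hadm' (Finset.subset_insert j S)
    exact hj (hins ▸ Finset.mem_insert_self j S)
  have hle : Ideal.span {x 0, x 1} ≤ Ideal.span {x 0, x 1, g3} :=
    Ideal.span_mono (by
      intro r hr
      simp only [Set.mem_insert_iff, Set.mem_singleton_iff] at hr ⊢
      tauto)
  refine le_antisymm ?_ ?_
  · -- colon ≤ span {x0, x1, g3}
    intro p hp
    rw [Ideal.mem_colon_span_singleton] at hp
    obtain ⟨a, r1, hr1, he1⟩ := Ideal.mem_span_insert.mp hp
    obtain ⟨b, r2, hr2, he2⟩ := Ideal.mem_span_insert.mp hr1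
    obtain ⟨c, hc⟩ := Ideal.mem_span_singleton'.mp hr2
    have heq : p * ∏ j, y j = a * x 0 + b * x 1 + c * f := by
      rw [he1, he2, ← hc]; ring
    have h1 : φ p * ∏ j, (X (Sum.inl j) : MvPolynomial (Fin q ⊕ Fin s) K) =
        φ c * ((∏ j ∈ S, X (Sum.inl j)) * φ g3) := by
      have h0 := congrArg φ heq
      simp only [map_mul, map_add, hφx0, hφx1, hφf, mul_zero, zero_add, add_zero,
        hφprod Finset.univ] at h0
      exact h0
    have hcan : φ p * ∏ j ∈ Sᶜ, (X (Sum.inl j) : MvPolynomial (Fin q ⊕ Fin s) K) =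
        φ c * φ g3 := by
      apply mul_left_cancel₀ hSne
      rw [← Finset.prod_mul_prod_compl S (fun j => (X (Sum.inl j) :
        MvPolynomial (Fin q ⊕ Fin s) K))] at h1
      linear_combination h1
    rcases eq_or_ne (φ g3) 0 with hg0 | hg0
    · have hScompl : Sᶜ = (∅ : Finset (Fin q)) := by
        by_contra hne
        obtain ⟨j, hj⟩ := Finset.nonempty_of_ne_empty hne
        exact hnd j (Finset.mem_compl.mp hj) (hg0 ▸ dvd_zero _)
      have hp0 : φ p = 0 := by
        rw [hScompl, Finset.prod_empty, mul_one, hg0, mul_zero] at hcan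
        exact hcan
      exact hle ((mem_span_xx_iff p).mpr hp0)
    · have hdvd : φ g3 ∣ φ p := by
        apply UniqueFactorizationMonoid.dvd_of_dvd_mul_left_of_no_prime_factors hg0 ?_
          (⟨φ c, by rw [hcan, mul_comm]⟩ : φ g3 ∣ φ p * ∏ j ∈ Sᶜ, X (Sum.inl j))
        intro d hd1 hd2 hdp
        obtain ⟨j, hjS, hdX⟩ := (Prime.dvd_finset_prod_iff hdp _).mp hd2
        have hassoc := (hdp.irreducible).associated_of_dvd
          (prime_X_mv (Sum.inl j)).irreducible hdX
        exact hnd j (Finset.mem_compl.mp hjS) (dvd_trans hassoc.symm.dvd hd1)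
      obtain ⟨e, he⟩ := hdvd
      have hk2 : p - ψ (φ p) ∈ Ideal.span {x 0, x 1} := keyA p
      have hk3 : g3 - ψ (φ g3) ∈ Ideal.span {x 0, x 1} := keyA g3
      have hrw : p = (p - ψ (φ p)) + (g3 * ψ e - (g3 - ψ (φ g3)) * ψ e) := by
        rw [he, map_mul]; ring
      rw [hrw]
      exact Ideal.add_mem _ (hle hk2) (Ideal.sub_mem _
        (Ideal.mul_mem_right _ _ (Ideal.subset_span (by simp)))
        (Ideal.mul_mem_right _ _ (hle hk3)))
  · -- span {x0, x1, g3} ≤ colon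
    rw [Ideal.span_le]
    rintro r hr
    have hx0m : x 0 ∈ Ideal.span {x 0, x 1, f} := Ideal.subset_span (by simp)
    have hx1m : x 1 ∈ Ideal.span {x 0, x 1, f} := Ideal.subset_span (by simp)
    have hfm : f ∈ Ideal.span {x 0, x 1, f} := Ideal.subset_span (by simp)
    simp only [Set.mem_insert_iff, Set.mem_singleton_iff] at hr
    rcases hr with h | h | h
    · rw [SetLike.mem_coe, h, Ideal.mem_colon_span_singleton]
      exact Ideal.mul_mem_right _ _ hx0m
    · rw [SetLike.mem_coe, h, Ideal.mem_colon_span_singleton]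
      exact Ideal.mul_mem_right _ _ hx1m
    · rw [SetLike.mem_coe, h, Ideal.mem_colon_span_singleton]
      have hsplit : (∏ j ∈ S, y j) * ∏ j ∈ Sᶜ, y j = ∏ j, y j :=
        Finset.prod_mul_prod_compl S y
      have hg3eq : g3 * ∏ j, y j =
          f * ∏ j ∈ Sᶜ, y j - x 0 * (g1 * ∏ j ∈ Sᶜ, y j) -
            x 1 * (g2 * ∏ j ∈ Sᶜ, y j) := by
        rw [← hsplit, hf]; ring
      rw [hg3eq]
      exact Ideal.sub_mem _ (Ideal.sub_mem _
        (Ideal.mul_mem_right _ _ hfm)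
        (Ideal.mul_mem_right _ _ hx0m))
        (Ideal.mul_mem_right _ _ hx1m)
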